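/- Let S ⊆ ℝ^p be compact with diameter D, let μ be a probability measure supported on S, let x ∉ S with dist(x,S) ≥ δ > 0. Then for every d ≥ 1, s(d)·Λ_{μ,d}(x) ≤ 2^{3 - δd/(δ+D)} · d^p · (e/p)^p · exp(p²/d), where s(d) = C(p+d,d). -/

import Mathlib

open MeasureTheory

/-- The Christoffel function `Λ_{μ,d}(x) = inf {∫ P² dμ : deg P ≤ d, P(x) = 1}`
for a measure on Euclidean space `ℝ^p`. -/
noncomputable def chrLambda (p d : ℕ) (μ : Measure (EuclideanSpace ℝ (Fin p)))
    (x : EuclideanSpace ℝ (Fin p)) : ℝ :=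
  sInf {y | ∃ P : MvPolynomial (Fin p) ℝ, P.totalDegree ≤ d ∧
    MvPolynomial.eval (x : Fin p → ℝ) P = 1 ∧
    y = ∫ z, (MvPolynomial.eval (z : Fin p → ℝ) P) ^ 2 ∂μ}

section AuxChristoffel
open Polynomial.Chebyshev

/-- `2^t ≤ 1 + t` for `t ∈ [0,1]`. -/
lemma aux_two_rpow_le_add_one {t : ℝ} (h0 : 0 ≤ t) (h1 : t ≤ 1) : (2:ℝ) ^ t ≤ 1 + t := by
  have h := convexOn_exp.2 (Set.mem_univ (0:ℝ)) (Set.mem_univ (Real.log 2))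
    (show (0:ℝ) ≤ 1 - t by linarith) h0 (show (1 - t) + t = 1 by ring)
  simp only [smul_eq_mul, mul_zero, zero_add, Real.exp_zero, Real.exp_log two_pos] at h
  have h2 : (2:ℝ) ^ t = Real.exp (t * Real.log 2) := by
    rw [Real.rpow_def_of_pos two_pos, mul_comm]
  rw [h2]; linarith

/-- Chebyshev T on cosh. -/
lemma aux_T_cosh (n : ℤ) (y : ℝ) :
    (Polynomial.Chebyshev.T ℝ n).eval (Real.cosh y) = Real.cosh (n * y) := by
  have h := Polynomial.Chebyshev.T_complex_cos (↑y * Complex.I) n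
  rw [Complex.cos_mul_I] at h
  apply Complex.ofReal_injective
  rw [Polynomial.Chebyshev.complex_ofReal_eval_T, Complex.ofReal_cosh, h, Complex.ofReal_cosh,
    ← Complex.cos_mul_I]
  push_cast
  ring_nf

/-- |T n t| ≤ 1 on [-1,1]. -/
lemma aux_T_abs_le (n : ℤ) {t : ℝ} (h1 : -1 ≤ t) (h2 : t ≤ 1) :
    |(Polynomial.Chebyshev.T ℝ n).eval t| ≤ 1 := by
  rw [← Real.cos_arccos h1 h2, Polynomial.Chebyshev.T_real_cos]
  exact Real.abs_cos_le_one _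

/-- Growth of T at points ≥ 1. -/
lemma aux_T_growth (n : ℕ) {s : ℝ} (hs : 1 ≤ s) :
    (s + Real.sqrt (s ^ 2 - 1)) ^ n ≤ 2 * (Polynomial.Chebyshev.T ℝ n).eval s := by
  set w : ℝ := s + Real.sqrt (s ^ 2 - 1) with hw
  have hs2 : (0:ℝ) ≤ s ^ 2 - 1 := by nlinarith
  have hsq : Real.sqrt (s ^ 2 - 1) ^ 2 = s ^ 2 - 1 := Real.sq_sqrt hs2
  have hwpos : 0 < w := by have := Real.sqrt_nonneg (s ^ 2 - 1); positivity
  set y : ℝ := Real.log w with hy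
  have hexp : Real.exp y = w := Real.exp_log hwpos
  have hcosh : Real.cosh y = s := by
    have hinv : w * (s - Real.sqrt (s ^ 2 - 1)) = 1 := by nlinarith
    have : Real.exp (-y) = s - Real.sqrt (s ^ 2 - 1) := by
      rw [Real.exp_neg, hexp]
      field_simp
      nlinarith
    rw [Real.cosh_eq, hexp, this]
    ring
  have key : (Polynomial.Chebyshev.T ℝ (n:ℤ)).eval s = Real.cosh (n * y) := by
    rw [← hcosh, aux_T_cosh]; norm_num
  rw [key, Real.cosh_eq]
  have : Real.exp ((n:ℝ) * y) = w ^ n := by rw [Real.exp_nat_mul, hexp]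
  have hpos : 0 < Real.exp (-((n:ℝ) * y)) := Real.exp_pos _
  rw [this] at *
  nlinarith [Real.exp_pos (-((n:ℝ) * y))]

variable {p : ℕ}

lemma aux_totalDegree_paeval_le (Q : Polynomial ℝ) (r : MvPolynomial (Fin p) ℝ) :
    (Polynomial.aeval r Q).totalDegree ≤ Q.natDegree * r.totalDegree := by
  rw [Polynomial.aeval_eq_sum_range]
  apply MvPolynomial.totalDegree_finsetSum_le
  intro i hi
  refine le_trans (MvPolynomial.totalDegree_smul_le _ _) ?_
  refine le_trans (MvPolynomial.totalDegree_pow _ _) ?_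
  exact Nat.mul_le_mul_right _ (Nat.lt_succ_iff.mp (Finset.mem_range.mp hi))

lemma aux_eval_paeval (Q : Polynomial ℝ) (r : MvPolynomial (Fin p) ℝ) (z : Fin p → ℝ) :
    MvPolynomial.eval z (Polynomial.aeval r Q) = Q.eval (MvPolynomial.eval z r) := by
  have : MvPolynomial.eval z (Polynomial.aeval r Q)
      = MvPolynomial.aeval z (Polynomial.aeval r Q) := by
    rw [← MvPolynomial.coe_aeval_eq_eval]; rfl
  have hz : MvPolynomial.aeval z r = MvPolynomial.eval z r := by
    rw [← MvPolynomial.coe_aeval_eq_eval]; rfl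
  rw [this, ← Polynomial.aeval_algHom_apply, hz, ← Polynomial.coe_aeval_eq_eval]

/-- Degree bound for natural Chebyshev. -/
lemma aux_T_natDegree (n : ℕ) : (Polynomial.Chebyshev.T ℝ (n:ℤ)).natDegree ≤ n := by
  induction n using Nat.strong_induction_on with
  | _ n ih =>
    match n with
    | 0 => simp [Polynomial.Chebyshev.T_zero]
    | 1 => simp [Polynomial.Chebyshev.T_one]
    | (m + 2) =>
      have h : ((m:ℤ) + 2) = (m + 1) + 1 := by ring
      have := Polynomial.Chebyshev.T_add_two ℝ (m : ℤ)
      have e2 : (((m + 2 : ℕ)) : ℤ) = (m : ℤ) + 2 := by push_cast; ring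
      rw [e2, this]
      refine le_trans (Polynomial.natDegree_sub_le _ _) ?_
      have h1 : (2 * Polynomial.X * Polynomial.Chebyshev.T ℝ ((m:ℤ) + 1)).natDegree ≤ m + 2 := by
        refine le_trans (Polynomial.natDegree_mul_le) ?_
        have : ((2 : Polynomial ℝ) * Polynomial.X).natDegree ≤ 1 := by
          refine le_trans (Polynomial.natDegree_mul_le) ?_
          simp
        have h2 : (Polynomial.Chebyshev.T ℝ ((m:ℤ) + 1)).natDegree ≤ m + 1 := by
          have := ih (m + 1) (by omega)
          rwa [show (((m+1:ℕ)):ℤ) = (m:ℤ) + 1 by push_cast; ring] at this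
        omega
      have h2 : (Polynomial.Chebyshev.T ℝ (m:ℤ)).natDegree ≤ m := ih m (by omega)
      simp only [max_le_iff]
      exact ⟨h1, by omega⟩

lemma aux_needle (p d' : ℕ) (S : Set (EuclideanSpace ℝ (Fin p)))
    (x : EuclideanSpace ℝ (Fin p)) (a D : ℝ) (ha : 0 < a) (hD : 0 < D)
    (hlow : ∀ z ∈ S, a ≤ dist x z) (hhigh : ∀ z ∈ S, dist x z ≤ a + D) :
    ∃ P : MvPolynomial (Fin p) ℝ, P.totalDegree ≤ 2 * d' ∧
      MvPolynomial.eval (x : Fin p → ℝ) P = 1 ∧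
      ∀ z ∈ S, |MvPolynomial.eval (z : Fin p → ℝ) P| ≤ 2 ^ ((1:ℝ) - a / (a + D) * d') := by
  set b : ℝ := a + D with hb
  have hab : a < b := by simp [hb]; linarith
  have hbpos : 0 < b := lt_trans ha hab
  have hba : (0:ℝ) < b ^ 2 - a ^ 2 := by nlinarith
  -- the squared-distance polynomial
  set r : MvPolynomial (Fin p) ℝ :=
    ∑ i : Fin p, (MvPolynomial.X i - MvPolynomial.C (x i)) ^ 2 with hr
  have hr_deg : r.totalDegree ≤ 2 := by
    apply MvPolynomial.totalDegree_finsetSum_le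
    intro i _
    refine le_trans (MvPolynomial.totalDegree_pow _ _) ?_
    have : (MvPolynomial.X i - MvPolynomial.C (x i)).totalDegree ≤ 1 := by
      rw [sub_eq_add_neg, ← MvPolynomial.C_neg]
      refine le_trans (MvPolynomial.totalDegree_add _ _) ?_
      simp [MvPolynomial.totalDegree_X, MvPolynomial.totalDegree_C]
    omega
  have hr_eval : ∀ z : EuclideanSpace ℝ (Fin p),
      MvPolynomial.eval (z : Fin p → ℝ) r = dist x z ^ 2 := by
    intro z
    have hd : dist x z = Real.sqrt (∑ i, dist (x i) (z i) ^ 2) := EuclideanSpace.dist_eq x z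
    have hnn : (0:ℝ) ≤ ∑ i, dist (x i) (z i) ^ 2 :=
      Finset.sum_nonneg fun i _ => sq_nonneg _
    rw [hd, Real.sq_sqrt hnn, hr]
    simp only [map_sum, map_pow, map_sub, MvPolynomial.eval_X, MvPolynomial.eval_C]
    refine Finset.sum_congr rfl fun i _ => ?_
    rw [Real.dist_eq, sq_abs]
    ring
  -- the affine normalization
  set w : MvPolynomial (Fin p) ℝ :=
    MvPolynomial.C ((a^2 + b^2) / (b^2 - a^2)) - MvPolynomial.C (2 / (b^2 - a^2)) * r with hwdef
  have hw_deg : w.totalDegree ≤ 2 := by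
    rw [hwdef, sub_eq_add_neg, ← neg_mul, ← MvPolynomial.C_neg]
    refine le_trans (MvPolynomial.totalDegree_add _ _) ?_
    have h1 := MvPolynomial.totalDegree_mul (MvPolynomial.C (-(2 / (b^2 - a^2))) :
      MvPolynomial (Fin p) ℝ) r
    simp only [MvPolynomial.totalDegree_C] at h1 ⊢
    omega
  have hw_eval : ∀ z : EuclideanSpace ℝ (Fin p),
      MvPolynomial.eval (z : Fin p → ℝ) w
        = (a^2 + b^2 - 2 * dist x z ^ 2) / (b^2 - a^2) := by
    intro z
    rw [hwdef]
    simp only [map_sub, map_mul, MvPolynomial.eval_C, hr_eval z]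
    ring
  set u0 : ℝ := (a^2 + b^2) / (b^2 - a^2) with hu0def
  set c : ℝ := (Polynomial.Chebyshev.T ℝ (d' : ℤ)).eval u0 with hcdef
  have hu0 : 1 ≤ u0 := by
    rw [hu0def, le_div_iff₀ hba]; nlinarith
  -- growth of c
  have hsqrt : Real.sqrt (u0 ^ 2 - 1) = 2 * a * b / (b^2 - a^2) := by
    have h1 : u0 ^ 2 - 1 = (2 * a * b / (b^2 - a^2)) ^ 2 := by
      rw [hu0def]; field_simp; ring
    rw [h1, Real.sqrt_sq (by positivity)]
  have hgrow : 2 ^ (a / b * d') / 2 ≤ c := by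
    have h1 := aux_T_growth d' hu0
    have h2 : u0 + Real.sqrt (u0 ^ 2 - 1) = (b + a) / (b - a) := by
      rw [hsqrt, hu0def, ← add_div]
      have e : a ^ 2 + b ^ 2 + 2 * a * b = (b + a) * (b + a) := by ring
      have e2 : b ^ 2 - a ^ 2 = (b + a) * (b - a) := by ring
      rw [e, e2, mul_div_mul_left _ _ (by linarith : b + a ≠ 0)]
    have h3 : 1 + a / b ≤ (b + a) / (b - a) := by
      rw [le_div_iff₀ (by linarith)]
      have : (1 + a/b) * (b - a) = b - a^2/b + (a - a) := by field_simp; ring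
      rw [this]
      have : a ^ 2 / b ≥ 0 := by positivity
      linarith
    have h4 : (2:ℝ) ^ (a / b) ≤ 1 + a / b :=
      aux_two_rpow_le_add_one (by positivity) (by rw [div_le_one hbpos]; linarith)
    have h5 : ((2:ℝ) ^ (a / b)) ^ d' ≤ (u0 + Real.sqrt (u0 ^ 2 - 1)) ^ d' := by
      apply pow_le_pow_left₀ (by positivity)
      rw [h2]; linarith
    have h6 : ((2:ℝ) ^ (a / b)) ^ d' = 2 ^ (a / b * d') := by
      rw [← Real.rpow_natCast ((2:ℝ) ^ (a/b)) d', ← Real.rpow_mul (by norm_num)]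
    rw [← h6]
    linarith
  have hcpos : 0 < c := lt_of_lt_of_le (by positivity) hgrow
  -- the needle polynomial
  refine ⟨MvPolynomial.C c⁻¹ * Polynomial.aeval w (Polynomial.Chebyshev.T ℝ (d' : ℤ)), ?_, ?_, ?_⟩
  · refine le_trans (MvPolynomial.totalDegree_mul _ _) ?_
    have h1 := aux_totalDegree_paeval_le (Polynomial.Chebyshev.T ℝ (d' : ℤ)) w
    have h2 := aux_T_natDegree d'
    have h3 : (Polynomial.Chebyshev.T ℝ (d' : ℤ)).natDegree * w.totalDegree ≤ d' * 2 :=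
      Nat.mul_le_mul h2 hw_deg
    simp only [MvPolynomial.totalDegree_C]
    omega
  · rw [map_mul, MvPolynomial.eval_C, aux_eval_paeval]
    have : MvPolynomial.eval (x : Fin p → ℝ) w = u0 := by
      rw [hw_eval x, dist_self]
      simp [hu0def]
    rw [this, ← hcdef]
    exact inv_mul_cancel₀ (ne_of_gt hcpos)
  · intro z hz
    rw [map_mul, MvPolynomial.eval_C, aux_eval_paeval, abs_mul, abs_inv, abs_of_pos hcpos]
    have ht1 : a ^ 2 ≤ dist x z ^ 2 := by
      have := hlow z hz
      nlinarith [dist_nonneg (x := x) (y := z)]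
    have ht2 : dist x z ^ 2 ≤ b ^ 2 := by
      have := hhigh z hz
      nlinarith [dist_nonneg (x := x) (y := z)]
    have habs : |(Polynomial.Chebyshev.T ℝ (d' : ℤ)).eval
        (MvPolynomial.eval (z : Fin p → ℝ) w)| ≤ 1 := by
      apply aux_T_abs_le
      · rw [hw_eval z, le_div_iff₀ hba]; nlinarith
      · rw [hw_eval z, div_le_one hba]; nlinarith
    have hc1 : c⁻¹ ≤ 2 ^ ((1:ℝ) - a / b * d') := by
      have h7 : (0:ℝ) < 2 ^ (a / b * d') / 2 := by positivity
      have h8 := inv_anti₀ h7 hgrow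
      refine le_trans h8 ?_
      rw [inv_div, Real.rpow_sub two_pos, Real.rpow_one]
    calc c⁻¹ * |(Polynomial.Chebyshev.T ℝ (d' : ℤ)).eval
          (MvPolynomial.eval (z : Fin p → ℝ) w)|
        ≤ c⁻¹ * 1 := by
          apply mul_le_mul_of_nonneg_left habs (le_of_lt (inv_pos.mpr hcpos))
      _ = c⁻¹ := mul_one _
      _ ≤ 2 ^ ((1:ℝ) - a / b * d') := hc1

lemma aux_chr_le {p d : ℕ} (μ : Measure (EuclideanSpace ℝ (Fin p)))
    (x : EuclideanSpace ℝ (Fin p)) (P : MvPolynomial (Fin p) ℝ)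
    (hdeg : P.totalDegree ≤ d) (hx : MvPolynomial.eval (x : Fin p → ℝ) P = 1) :
    chrLambda p d μ x ≤ ∫ z, (MvPolynomial.eval (z : Fin p → ℝ) P) ^ 2 ∂μ := by
  apply csInf_le
  · refine ⟨0, fun y hy => ?_⟩
    obtain ⟨Q, -, -, rfl⟩ := hy
    exact integral_nonneg fun z => sq_nonneg _
  · exact ⟨P, hdeg, hx, rfl⟩

lemma aux_integral_le {p : ℕ} (μ : Measure (EuclideanSpace ℝ (Fin p)))
    [IsProbabilityMeasure μ] (S : Set (EuclideanSpace ℝ (Fin p))) (hsupp : μ Sᶜ = 0)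
    (f : EuclideanSpace ℝ (Fin p) → ℝ) {C : ℝ}
    (hf : ∀ z ∈ S, |f z| ≤ C) :
    ∫ z, (f z) ^ 2 ∂μ ≤ C ^ 2 := by
  have hae : ∀ᵐ z ∂μ, z ∈ S := by
    rw [MeasureTheory.ae_iff]
    exact hsupp
  have hb : ∀ᵐ z ∂μ, ‖(f z) ^ 2‖ ≤ C ^ 2 := by
    filter_upwards [hae] with z hz
    rw [Real.norm_eq_abs, abs_of_nonneg (sq_nonneg _), ← sq_abs]
    exact pow_le_pow_left₀ (abs_nonneg _) (hf z hz) 2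
  calc ∫ z, (f z) ^ 2 ∂μ ≤ ‖∫ z, (f z) ^ 2 ∂μ‖ := by
        rw [Real.norm_eq_abs]; exact le_abs_self _
    _ ≤ C ^ 2 * (μ Set.univ).toReal := norm_integral_le_of_norm_le_const hb
    _ = C ^ 2 := by simp

lemma aux_choose_le (p d : ℕ) (hp : 1 ≤ p) (hd : 1 ≤ d) :
    ((p + d).choose d : ℝ) ≤ (d : ℝ) ^ p * (Real.exp 1 / p) ^ p * Real.exp ((p : ℝ) ^ 2 / d) := by
  have hpR : (0:ℝ) < p := by exact_mod_cast hp
  have hdR : (0:ℝ) < d := by exact_mod_cast hd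
  have hfp : (0:ℝ) < p.factorial := by exact_mod_cast p.factorial_pos
  have h0 : (p + d).choose d = (p + d).choose p := by
    have := Nat.choose_symm (Nat.le_add_right p d) (n := p + d)
    rwa [Nat.add_sub_cancel_left] at this
  have h1 : ((p + d).choose p : ℝ) ≤ ((p : ℝ) + d) ^ p / p.factorial := by
    have := Nat.choose_le_pow_div (α := ℝ) p (p + d)
    push_cast at this ⊢
    exact this
  have h2 : ((p : ℝ)) ^ p / p.factorial ≤ Real.exp p := Real.pow_div_factorial_le_exp _ hpR.le p
  have h4 : ((p.factorial : ℝ))⁻¹ ≤ Real.exp p / (p : ℝ) ^ p := by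
    rw [div_le_iff₀ hfp] at h2
    rw [inv_eq_one_div, div_le_div_iff₀ hfp (pow_pos hpR p), one_mul]
    linarith
  have h3 : ((p : ℝ) + d) ^ p ≤ (d : ℝ) ^ p * Real.exp ((p : ℝ) ^ 2 / d) := by
    have hb : (p : ℝ) + d = d * ((p : ℝ) / d + 1) := by field_simp
    have he : (p : ℝ) / d + 1 ≤ Real.exp ((p : ℝ) / d) := Real.add_one_le_exp _
    calc ((p : ℝ) + d) ^ p = (d : ℝ) ^ p * ((p : ℝ) / d + 1) ^ p := by
          rw [hb, mul_pow]
      _ ≤ (d : ℝ) ^ p * Real.exp ((p : ℝ) / d) ^ p := by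
          apply mul_le_mul_of_nonneg_left _ (by positivity)
          exact pow_le_pow_left₀ (by positivity) he p
      _ = (d : ℝ) ^ p * Real.exp ((p : ℝ) ^ 2 / d) := by
          rw [← Real.exp_nat_mul]
          congr 1
          field_simp
  have hexp : Real.exp (p : ℝ) = Real.exp 1 ^ p := by
    rw [← Real.exp_nat_mul, mul_one]
  calc ((p + d).choose d : ℝ) = ((p + d).choose p : ℝ) := by rw [h0]
    _ ≤ ((p : ℝ) + d) ^ p / p.factorial := h1
    _ = ((p : ℝ) + d) ^ p * (p.factorial : ℝ)⁻¹ := div_eq_mul_inv _ _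
    _ ≤ ((d : ℝ) ^ p * Real.exp ((p : ℝ) ^ 2 / d)) * (Real.exp p / (p : ℝ) ^ p) := by
        apply mul_le_mul h3 h4 (by positivity) (by positivity)
    _ = (d : ℝ) ^ p * (Real.exp 1 / p) ^ p * Real.exp ((p : ℝ) ^ 2 / d) := by
        rw [hexp, div_pow]
        ring

end AuxChristoffel

/-- Upper bound on the scaled Christoffel function outside the support: if `μ` is a
probability measure supported on a compact set `S` of diameter `D`, `x ∉ S` with
`dist(x,S) ≥ δ > 0`, then for every `d ≥ 1`,
`s(d)·Λ_{μ,d}(x) ≤ 2^{3-δd/(δ+D)}·d^p·(e/p)^p·exp(p²/d)` with `s(d) = C(p+d,d)`. -/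
theorem christoffel_upper_bound_outside (p d : ℕ) (hp : 1 ≤ p) (hd : 1 ≤ d)
    (μ : Measure (EuclideanSpace ℝ (Fin p))) [IsProbabilityMeasure μ]
    (S : Set (EuclideanSpace ℝ (Fin p))) (hS : IsCompact S) (hsupp : μ Sᶜ = 0)
    (x : EuclideanSpace ℝ (Fin p)) (hx : x ∉ S)
    (δ : ℝ) (hδ : 0 < δ) (hdist : δ ≤ Metric.infDist x S) :
    ((p + d).choose d : ℝ) * chrLambda p d μ x ≤
      (2 : ℝ) ^ ((3 : ℝ) - δ * d / (δ + Metric.diam S)) * (d : ℝ) ^ p *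
        (Real.exp 1 / p) ^ p * Real.exp ((p : ℝ) ^ 2 / d) := by
  have hSne : S.Nonempty := by
    by_contra h
    rw [Set.not_nonempty_iff_eq_empty] at h
    rw [h, Set.compl_empty] at hsupp
    simp at hsupp
  set a : ℝ := Metric.infDist x S with hadef
  have ha : 0 < a := lt_of_lt_of_le hδ hdist
  set D : ℝ := Metric.diam S with hDdef
  have hD0 : 0 ≤ D := Metric.diam_nonneg
  have hchoose : (0:ℝ) ≤ ((p + d).choose d : ℝ) := by positivity
  rcases eq_or_lt_of_le hD0 with hD | hD
  · -- degenerate case: S is a single point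
    obtain ⟨s₀, hs₀⟩ := hSne
    have hsingle : ∀ z ∈ S, z = s₀ := by
      intro z hz
      have h1 : dist z s₀ ≤ D := Metric.dist_le_diam_of_mem hS.isBounded hz hs₀
      have h2 : dist z s₀ = 0 := le_antisymm (by rw [← hD] at h1; exact h1) dist_nonneg
      exact dist_eq_zero.mp h2
    have hxs : x ≠ s₀ := fun h => hx (h ▸ hs₀)
    have hxi : ∃ i, (x : Fin p → ℝ) i ≠ (s₀ : Fin p → ℝ) i := by
      by_contra h
      push_neg at h
      exact hxs (PiLp.ext h)
    obtain ⟨i, hi⟩ := hxi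
    set P : MvPolynomial (Fin p) ℝ :=
      MvPolynomial.C ((x i - s₀ i)⁻¹) * (MvPolynomial.X i - MvPolynomial.C (s₀ i)) with hPdef
    have hPdeg : P.totalDegree ≤ d := by
      rw [hPdef]
      refine le_trans (MvPolynomial.totalDegree_mul _ _) (le_trans ?_ hd)
      have : (MvPolynomial.X i - MvPolynomial.C (s₀ i) :
          MvPolynomial (Fin p) ℝ).totalDegree ≤ 1 := by
        rw [sub_eq_add_neg, ← MvPolynomial.C_neg]
        refine le_trans (MvPolynomial.totalDegree_add _ _) ?_
        simp [MvPolynomial.totalDegree_X, MvPolynomial.totalDegree_C]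
      simp only [MvPolynomial.totalDegree_C]
      omega
    have hPx : MvPolynomial.eval (x : Fin p → ℝ) P = 1 := by
      rw [hPdef]
      simp only [map_mul, map_sub, MvPolynomial.eval_C, MvPolynomial.eval_X]
      exact inv_mul_cancel₀ (sub_ne_zero.mpr hi)
    have hint : ∫ z, (MvPolynomial.eval (z : Fin p → ℝ) P) ^ 2 ∂μ = 0 := by
      have hae : ∀ᵐ z ∂μ, z ∈ S := by rw [MeasureTheory.ae_iff]; exact hsupp
      rw [integral_eq_zero_of_ae]
      filter_upwards [hae] with z hz
      rw [hsingle z hz, hPdef]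
      simp
    have hchr : chrLambda p d μ x ≤ 0 := by
      have := aux_chr_le μ x P hPdeg hPx
      rwa [hint] at this
    have hlhs : ((p + d).choose d : ℝ) * chrLambda p d μ x ≤ 0 :=
      mul_nonpos_of_nonneg_of_nonpos hchoose hchr
    have hrhs : (0:ℝ) ≤ (2 : ℝ) ^ ((3 : ℝ) - δ * d / (δ + D)) * (d : ℝ) ^ p *
        (Real.exp 1 / p) ^ p * Real.exp ((p : ℝ) ^ 2 / d) := by positivity
    linarith
  · -- main case: D > 0
    set d2 : ℕ := d / 2 with hd2def
    have hlow : ∀ z ∈ S, a ≤ dist x z := fun z hz => Metric.infDist_le_dist_of_mem hz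
    have hhigh : ∀ z ∈ S, dist x z ≤ a + D := by
      intro z hz
      obtain ⟨y, hy, hxy⟩ := hS.exists_infDist_eq_dist hSne x
      calc dist x z ≤ dist x y + dist y z := dist_triangle _ _ _
        _ ≤ a + D := add_le_add (le_of_eq hxy.symm)
            (Metric.dist_le_diam_of_mem hS.isBounded hy hz)
    obtain ⟨P, hPdeg, hPx, hPbound⟩ := aux_needle p d2 S x a D ha hD hlow hhigh
    have hPdeg' : P.totalDegree ≤ d := le_trans hPdeg (by omega)
    have hCnn : (0:ℝ) ≤ (2:ℝ) ^ ((1:ℝ) - a / (a + D) * d2) := Real.rpow_nonneg (by norm_num) _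
    have hchr : chrLambda p d μ x ≤ ((2:ℝ) ^ ((1:ℝ) - a / (a + D) * d2)) ^ 2 :=
      le_trans (aux_chr_le μ x P hPdeg' hPx)
        (aux_integral_le μ S hsupp _ hPbound)
    have hsq : ((2:ℝ) ^ ((1:ℝ) - a / (a + D) * d2)) ^ 2
        = (2:ℝ) ^ (((1:ℝ) - a / (a + D) * d2) * 2) := by
      rw [Real.rpow_mul (by norm_num : (0:ℝ) ≤ 2), Real.rpow_two]
    have hb : 0 < a + D := by linarith
    have hfrac1 : a / (a + D) ≤ 1 := by rw [div_le_one hb]; linarith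
    have hfrac0 : 0 ≤ a / (a + D) := by positivity
    have hdd2 : (d:ℝ) - 2 * d2 ≤ 1 := by
      have : d - 2 * d2 ≤ 1 := by omega
      have h2d : 2 * d2 ≤ d := by omega
      push_cast
      have : ((d - 2 * d2 : ℕ) : ℝ) ≤ 1 := by exact_mod_cast this
      rw [Nat.cast_sub h2d] at this
      push_cast at this
      linarith
    have hexp1 : ((1:ℝ) - a / (a + D) * d2) * 2 ≤ 3 - a / (a + D) * d := by
      have h2d2 : (0:ℝ) ≤ (d2:ℝ) := by positivity
      have h2dle : (2:ℝ) * d2 ≤ d := by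
        have : 2 * d2 ≤ d := by omega
        exact_mod_cast this
      nlinarith [mul_le_one₀ hfrac1 (by linarith : (0:ℝ) ≤ (d:ℝ) - 2 * d2) hdd2,
        mul_nonneg hfrac0 (by linarith : (0:ℝ) ≤ (d:ℝ) - 2 * d2)]
    have hexp2 : (3:ℝ) - a / (a + D) * d ≤ 3 - δ * d / (δ + D) := by
      have hδD : 0 < δ + D := by linarith
      have hmono : δ / (δ + D) ≤ a / (a + D) := by
        rw [div_le_div_iff₀ hδD hb]
        nlinarith
      have : δ * d / (δ + D) = (δ / (δ + D)) * d := by ring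
      rw [this]
      have hdnn : (0:ℝ) ≤ d := by positivity
      nlinarith [mul_le_mul_of_nonneg_right hmono hdnn]
    have hchr' : chrLambda p d μ x ≤ (2:ℝ) ^ ((3:ℝ) - δ * d / (δ + D)) := by
      refine le_trans hchr ?_
      rw [hsq]
      exact Real.rpow_le_rpow_of_exponent_le (by norm_num) (le_trans hexp1 hexp2)
    have hR : (0:ℝ) ≤ (2:ℝ) ^ ((3:ℝ) - δ * d / (δ + D)) := Real.rpow_nonneg (by norm_num) _
    calc ((p + d).choose d : ℝ) * chrLambda p d μ x
        ≤ ((p + d).choose d : ℝ) * (2:ℝ) ^ ((3:ℝ) - δ * d / (δ + D)) :=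
          mul_le_mul_of_nonneg_left hchr' hchoose
      _ ≤ ((d : ℝ) ^ p * (Real.exp 1 / p) ^ p * Real.exp ((p : ℝ) ^ 2 / d)) *
            (2:ℝ) ^ ((3:ℝ) - δ * d / (δ + D)) :=
          mul_le_mul_of_nonneg_right (aux_choose_le p d hp hd) hR
      _ = (2 : ℝ) ^ ((3 : ℝ) - δ * d / (δ + D)) * (d : ℝ) ^ p *
            (Real.exp 1 / p) ^ p * Real.exp ((p : ℝ) ^ 2 / d) := by ring
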